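/- Let M be a real m×n matrix, γ ∈ ℝᵐ, ṽ ∈ ℝⁿ, and let l > 0, κ > 0, λ > 0 be such that wᵀ·(I_n + l·Mᵀ·M)⁻¹·w ≥ λ·‖w‖² for all w ∈ ℝⁿ and 1/κ < l·λ. Set a := Mᵀ·γ ∈ ℝⁿ. Then −⟪a, l·Mᵀ·(I_m + l·M·Mᵀ)⁻¹·γ − ṽ⟫ ≤ −(l·λ − 1/κ)·‖a‖² + κ·‖ṽ‖². -/

import Mathlib

open Matrix

lemma dp_self_nonneg {k : ℕ} (w : Fin k → ℝ) : 0 ≤ w ⬝ᵥ w :=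
  Finset.sum_nonneg fun i _ => mul_self_nonneg _

lemma posSemidef_smul_real {k : ℕ} (A : Matrix (Fin k) (Fin k) ℝ)
    (hA : A.PosSemidef) {l : ℝ} (hl : 0 ≤ l) : (l • A).PosSemidef := by
  refine Matrix.posSemidef_iff_dotProduct_mulVec.mpr ⟨?_, fun x => ?_⟩
  · unfold Matrix.IsHermitian
    rw [conjTranspose_smul, hA.1]
    simp
  · rw [smul_mulVec, dotProduct_smul]
    exact mul_nonneg hl (hA.dotProduct_mulVec_nonneg x)

lemma posDef_one_add_smul {k : ℕ} (A : Matrix (Fin k) (Fin k) ℝ)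
    (hA : A.PosSemidef) {l : ℝ} (hl : 0 ≤ l) :
    (1 + l • A : Matrix (Fin k) (Fin k) ℝ).PosDef :=
  Matrix.PosDef.add_posSemidef Matrix.PosDef.one (posSemidef_smul_real A hA hl)

/-- Push-through identity for the regularized inverses. -/
lemma push_through (m n : ℕ) (M : Matrix (Fin m) (Fin n) ℝ) (l : ℝ) (hl : 0 < l) :
    (1 + l • (Mᵀ * M))⁻¹ * Mᵀ = Mᵀ * (1 + l • (M * Mᵀ))⁻¹ := by
  have hA : (1 + l • (Mᵀ * M) : Matrix (Fin n) (Fin n) ℝ).PosDef :=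
    posDef_one_add_smul _ (by simpa using Matrix.posSemidef_conjTranspose_mul_self M) hl.le
  have hB : (1 + l • (M * Mᵀ) : Matrix (Fin m) (Fin m) ℝ).PosDef :=
    posDef_one_add_smul _ (by simpa using Matrix.posSemidef_self_mul_conjTranspose M) hl.le
  have key : (1 + l • (Mᵀ * M)) * Mᵀ = Mᵀ * (1 + l • (M * Mᵀ)) := by
    rw [Matrix.add_mul, Matrix.mul_add, Matrix.one_mul, Matrix.mul_one, Matrix.smul_mul, Matrix.mul_smul,
      Matrix.mul_assoc]
  have hAu := (Matrix.isUnit_iff_isUnit_det _).1 hA.isUnit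
  have hBu := (Matrix.isUnit_iff_isUnit_det _).1 hB.isUnit
  calc (1 + l • (Mᵀ * M))⁻¹ * Mᵀ
      = (1 + l • (Mᵀ * M))⁻¹ * (Mᵀ * (1 + l • (M * Mᵀ)) * (1 + l • (M * Mᵀ))⁻¹) := by
        rw [Matrix.mul_assoc Mᵀ, Matrix.mul_nonsing_inv _ hBu, Matrix.mul_one]
    _ = Mᵀ * (1 + l • (M * Mᵀ))⁻¹ := by
        rw [← key, ← Matrix.mul_assoc, ← Matrix.mul_assoc,
          Matrix.nonsing_inv_mul _ hAu, Matrix.one_mul]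

/-- Appendix A (proof of Lemma 3.2), per-robot dissipation inequality:
with `a = Mᵀγ`, an eigenvalue lower bound `λ` on `(I_n + l Mᵀ M)⁻¹` and
`1/κ < l λ`, one has
`-⟪a, l Mᵀ (I_m + l M Mᵀ)⁻¹ γ - ṽ⟫ ≤ -(lλ - 1/κ) ‖a‖² + κ ‖ṽ‖²`. -/
theorem dissipation_inequality
    (m n : ℕ) (M : Matrix (Fin m) (Fin n) ℝ)
    (γ : Fin m → ℝ) (vt : Fin n → ℝ)
    (l κ lam : ℝ) (hl : 0 < l) (hκ : 0 < κ) (hlam : 0 < lam)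
    (hquad : ∀ w : Fin n → ℝ, lam * (w ⬝ᵥ w) ≤ w ⬝ᵥ ((1 + l • (Mᵀ * M))⁻¹ *ᵥ w))
    (hκl : 1 / κ < l * lam) :
    -((Mᵀ *ᵥ γ) ⬝ᵥ (l • (Mᵀ *ᵥ ((1 + l • (M * Mᵀ))⁻¹ *ᵥ γ)) - vt)) ≤
      -((l * lam - 1 / κ) * ((Mᵀ *ᵥ γ) ⬝ᵥ (Mᵀ *ᵥ γ))) + κ * (vt ⬝ᵥ vt) := by
  set a : Fin n → ℝ := Mᵀ *ᵥ γ with ha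
  have hpt : Mᵀ *ᵥ ((1 + l • (M * Mᵀ))⁻¹ *ᵥ γ) = (1 + l • (Mᵀ * M))⁻¹ *ᵥ a := by
    rw [ha, Matrix.mulVec_mulVec, Matrix.mulVec_mulVec, push_through m n M l hl,
      ← Matrix.mulVec_mulVec]
  rw [hpt]
  have h1 : l * lam * (a ⬝ᵥ a) ≤ a ⬝ᵥ (l • ((1 + l • (Mᵀ * M))⁻¹ *ᵥ a)) := by
    rw [dotProduct_smul, smul_eq_mul, mul_assoc]
    exact mul_le_mul_of_nonneg_left (hquad a) hl.le
  have h2 : a ⬝ᵥ vt ≤ (1 / κ) * (a ⬝ᵥ a) + κ * (vt ⬝ᵥ vt) := by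
    have key : 0 ≤ (fun i => a i - κ * vt i) ⬝ᵥ (fun i => a i - κ * vt i) :=
      dp_self_nonneg _
    have expand : (fun i => a i - κ * vt i) ⬝ᵥ (fun i => a i - κ * vt i)
        = a ⬝ᵥ a - 2 * κ * (a ⬝ᵥ vt) + κ^2 * (vt ⬝ᵥ vt) := by
      simp only [dotProduct, Finset.mul_sum, Finset.sum_sub_distrib, ← Finset.sum_add_distrib,
        ← Finset.sum_sub_distrib]
      apply Finset.sum_congr rfl; intro i _; ring
    rw [expand] at key
    have h3 : a ⬝ᵥ vt ≤ (a ⬝ᵥ a + κ^2 * (vt ⬝ᵥ vt)) / (2 * κ) := by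
      rw [le_div_iff₀ (by positivity)]
      nlinarith [key]
    have h4 : 0 ≤ a ⬝ᵥ a := dp_self_nonneg a
    have h5 : 0 ≤ vt ⬝ᵥ vt := dp_self_nonneg vt
    calc a ⬝ᵥ vt ≤ (a ⬝ᵥ a + κ^2 * (vt ⬝ᵥ vt)) / (2 * κ) := h3
      _ ≤ (1 / κ) * (a ⬝ᵥ a) + κ * (vt ⬝ᵥ vt) := by
          rw [div_le_iff₀ (by positivity)]
          have hκinv : (1 / κ) * κ = 1 := by field_simp
          nlinarith [mul_nonneg h4 hκ.le, mul_nonneg h5 hκ.le]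
  have hexp : -(a ⬝ᵥ (l • ((1 + l • (Mᵀ * M))⁻¹ *ᵥ a) - vt))
      = -(a ⬝ᵥ (l • ((1 + l • (Mᵀ * M))⁻¹ *ᵥ a))) + a ⬝ᵥ vt := by
    rw [dotProduct_sub]; ring
  rw [hexp]
  linarith [h1, h2]
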